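/- Let K be a field and G a small groupoid. The K-linearization K[G] admits a separability family if and only if for all objects x, y of G the set Hom_G(x,y) is finite and, whenever Hom_G(x,y) is nonempty, its cardinality (viewed as an element of K) is invertible in K. -/

import Mathlib

open CategoryTheory TensorProduct

/-- Composition as a `K`-linear map out of the tensor product of Hom spaces:
`h ⊗ k ↦ h ∘ k = k ≫ h`. -/
noncomputable def compMap (K : Type*) [Field K] {C : Type*} [Category C] [Preadditive C]
    [Linear K C] (X Y Z : C) : ((Z ⟶ X) ⊗[K] (Y ⟶ Z)) →ₗ[K] (Y ⟶ X) :=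
  TensorProduct.lift (LinearMap.mk₂ K (fun (h : Z ⟶ X) (k : Y ⟶ Z) => k ≫ h)
    (fun h h' k => by simp) (fun r h k => by simp)
    (fun h k k' => by simp) (fun r h k => by simp))

/-- A separability family for a `K`-linear category `C`. -/
structure SeparabilityFamily (K : Type*) [Field K] (C : Type*) [Category C] [Preadditive C]
    [Linear K C] where
  a : ∀ x y : C, (y ⟶ x) ⊗[K] (x ⟶ y)
  finite_support : ∀ x : C, {y : C | a x y ≠ 0}.Finite
  sum_comp : ∀ x : C, (∑ᶠ y : C, compMap K x x y (a x y)) = 𝟙 x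
  compat : ∀ {x z : C} (f : x ⟶ z) (y : C),
    LinearMap.rTensor (x ⟶ y) (Linear.rightComp K y f) (a x y)
      = LinearMap.lTensor (y ⟶ z) (Linear.leftComp K y f) (a z y)

namespace FreeSepAux

variable {K : Type*} [Field K] {G : Type*} [Groupoid G]

def toF {x y : G} (u : Free.of K x ⟶ Free.of K y) : (x ⟶ y) →₀ K := u
def ofF {x y : G} (u : (x ⟶ y) →₀ K) : Free.of K x ⟶ Free.of K y := u

open scoped Classical in
@[simp] theorem toF_single {x y : G} (σ : x ⟶ y) (r : K) (τ : x ⟶ y) :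
    toF (Finsupp.single σ r) τ = if σ = τ then r else 0 := Finsupp.single_apply

@[simp] theorem toF_add {x y : G} (u v : Free.of K x ⟶ Free.of K y) (g : x ⟶ y) :
    toF (u + v) g = toF u g + toF v g := rfl

@[simp] theorem toF_zero {x y : G} (g : x ⟶ y) :
    toF (0 : Free.of K x ⟶ Free.of K y) g = 0 := rfl

@[simp] theorem toF_smul {x y : G} (r : K) (u : Free.of K x ⟶ Free.of K y) (g : x ⟶ y) :
    toF (r • u) g = r * toF u g := rfl

theorem toF_comp_single {x y z : G} (u : Free.of K y ⟶ Free.of K x) (σ : x ⟶ z) (r : K)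
    (g : y ⟶ z) :
    toF (u ≫ (Finsupp.single σ r : Free.of K x ⟶ Free.of K z)) g
      = toF u (g ≫ Groupoid.inv σ) * r := by
  suffices h : ∀ w : (y ⟶ x) →₀ K,
      toF (ofF w ≫ (Finsupp.single σ r : Free.of K x ⟶ Free.of K z)) g
        = toF (ofF w) (g ≫ Groupoid.inv σ) * r from h (toF u)
  intro w
  induction w using Finsupp.induction_linear with
  | zero =>
      have : (ofF (0 : (y ⟶ x) →₀ K) : Free.of K y ⟶ Free.of K x) = 0 := rfl
      rw [this, Limits.zero_comp]
      simp
  | add a b ha hb =>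
      have : (ofF (a + b) : Free.of K y ⟶ Free.of K x) = ofF a + ofF b := rfl
      rw [this, Preadditive.add_comp]
      simp only [toF_add, ha, hb, add_mul]
  | single τ s =>
      have : (ofF (Finsupp.single τ s) : Free.of K y ⟶ Free.of K x) ≫ Finsupp.single σ r
          = Finsupp.single (τ ≫ σ) (s * r) := Free.single_comp_single (R := K) (C := G) τ σ s r
      erw [this]
      show toF _ g = toF (Finsupp.single τ s) _ * r
      erw [toF_single, toF_single]
      by_cases hc : τ ≫ σ = g
      · have h2 : τ = g ≫ Groupoid.inv σ := by rw [← hc]; simp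
        rw [if_pos hc, if_pos h2]
      · have h2 : ¬ (τ = g ≫ Groupoid.inv σ) := fun hh => hc (by rw [hh]; simp)
        rw [if_neg hc, if_neg h2, zero_mul]

theorem single_comp {x y z : G} (v : Free.of K z ⟶ Free.of K y) (σ : x ⟶ z) (r : K)
    (h : x ⟶ y) :
    toF ((Finsupp.single σ r : Free.of K x ⟶ Free.of K z) ≫ v) h
      = r * toF v (Groupoid.inv σ ≫ h) := by
  suffices hs : ∀ w : (z ⟶ y) →₀ K,
      toF ((Finsupp.single σ r : Free.of K x ⟶ Free.of K z) ≫ ofF w) h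
        = r * toF (ofF w) (Groupoid.inv σ ≫ h) from hs (toF v)
  intro w
  induction w using Finsupp.induction_linear with
  | zero =>
      have : (ofF (0 : (z ⟶ y) →₀ K) : Free.of K z ⟶ Free.of K y) = 0 := rfl
      rw [this, Limits.comp_zero]
      simp
  | add a b ha hb =>
      have : (ofF (a + b) : Free.of K z ⟶ Free.of K y) = ofF a + ofF b := rfl
      rw [this, Preadditive.comp_add]
      simp only [toF_add, ha, hb, mul_add]
  | single τ s =>
      have : (Finsupp.single σ r : Free.of K x ⟶ Free.of K z) ≫
            (ofF (Finsupp.single τ s) : Free.of K z ⟶ Free.of K y)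
          = Finsupp.single (σ ≫ τ) (r * s) := Free.single_comp_single (R := K) (C := G) σ τ r s
      rw [this]
      show toF _ h = r * toF (Finsupp.single τ s) _
      erw [toF_single, toF_single]
      by_cases hc : σ ≫ τ = h
      · have h2 : τ = Groupoid.inv σ ≫ h := by rw [← hc]; simp
        rw [if_pos hc, if_pos h2]
      · have h2 : ¬ (τ = Groupoid.inv σ ≫ h) := fun hh => hc (by rw [hh]; simp)
        rw [if_neg hc, if_neg h2, mul_zero]

/-- Coefficient functional on a tensor product of Hom-spaces of `Free K G`. -/
noncomputable def coeff {x y z w : G} (g : x ⟶ y) (h : z ⟶ w) :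
    ((Free.of K x ⟶ Free.of K y) ⊗[K] (Free.of K z ⟶ Free.of K w)) →ₗ[K] K :=
  (TensorProduct.lid K K).toLinearMap.comp
    (TensorProduct.map (Finsupp.lapply (M := K) g) (Finsupp.lapply (M := K) h))

theorem coeff_tmul {x y z w : G} (g : x ⟶ y) (h : z ⟶ w)
    (u : Free.of K x ⟶ Free.of K y) (v : Free.of K z ⟶ Free.of K w) :
    coeff g h (u ⊗ₜ v) = toF u g * toF v h := rfl

/-- finite support of coefficients -/
theorem coeff_finite {x y z w : G}
    (t : (Free.of K x ⟶ Free.of K y) ⊗[K] (Free.of K z ⟶ Free.of K w)) :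
    {p : (x ⟶ y) × (z ⟶ w) | coeff p.1 p.2 t ≠ 0}.Finite := by
  induction t with
  | zero => simp only [map_zero]; simp
  | tmul u v =>
      apply Set.Finite.subset (Set.Finite.prod (toF u).finite_support (toF v).finite_support)
      rintro ⟨g, h⟩ hp
      rw [Set.mem_setOf_eq, coeff_tmul] at hp
      constructor <;> · simp only [Function.mem_support]; intro hz; simp [hz] at hp
  | add s t hs ht =>
      apply Set.Finite.subset (hs.union ht)
      rintro ⟨g, h⟩ hp
      rw [Set.mem_setOf_eq, map_add] at hp
      by_contra hmem
      simp only [Set.mem_union, Set.mem_setOf_eq, not_or, not_not] at hmem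
      rw [hmem.1, hmem.2, add_zero] at hp
      exact hp rfl


theorem coeff_rTensor_single {x y z : G} (σ : x ⟶ z) (r : K)
    (t : (Free.of K y ⟶ Free.of K x) ⊗[K] (Free.of K x ⟶ Free.of K y))
    (g : y ⟶ z) (h : x ⟶ y) :
    coeff g h (LinearMap.rTensor (Free.of K x ⟶ Free.of K y)
        (Linear.rightComp K (Free.of K y) (Finsupp.single σ r : Free.of K x ⟶ Free.of K z)) t)
      = coeff (g ≫ Groupoid.inv σ) h t * r := by
  induction t with
  | zero => simp
  | tmul u v =>
      rw [LinearMap.rTensor_tmul, coeff_tmul, coeff_tmul]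
      have : Linear.rightComp K (Free.of K y)
          (Finsupp.single σ r : Free.of K x ⟶ Free.of K z) u
          = u ≫ (Finsupp.single σ r : Free.of K x ⟶ Free.of K z) := rfl
      rw [this, toF_comp_single]; ring
  | add s t hs ht => rw [map_add, map_add, map_add, hs, ht, add_mul]

theorem coeff_lTensor_single {x y z : G} (σ : x ⟶ z) (r : K)
    (t : (Free.of K y ⟶ Free.of K z) ⊗[K] (Free.of K z ⟶ Free.of K y))
    (g : y ⟶ z) (h : x ⟶ y) :
    coeff g h (LinearMap.lTensor (Free.of K y ⟶ Free.of K z)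
        (Linear.leftComp K (Free.of K y) (Finsupp.single σ r : Free.of K x ⟶ Free.of K z)) t)
      = r * coeff g (Groupoid.inv σ ≫ h) t := by
  induction t with
  | zero => simp
  | tmul u v =>
      rw [LinearMap.lTensor_tmul, coeff_tmul, coeff_tmul]
      have : Linear.leftComp K (Free.of K y)
          (Finsupp.single σ r : Free.of K x ⟶ Free.of K z) v
          = (Finsupp.single σ r : Free.of K x ⟶ Free.of K z) ≫ v := rfl
      rw [this, single_comp]; ring
  | add s t hs ht => rw [map_add, map_add, map_add, hs, ht, mul_add]

theorem diag_finite {x y : G}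
    (t : (Free.of K y ⟶ Free.of K x) ⊗[K] (Free.of K x ⟶ Free.of K y)) :
    (Function.support fun σ : x ⟶ y => coeff (Groupoid.inv σ) σ t).Finite := by
  have hsub : (Function.support fun σ : x ⟶ y => coeff (Groupoid.inv σ) σ t)
      ⊆ (fun σ : x ⟶ y => ((Groupoid.inv σ, σ) : (y ⟶ x) × (x ⟶ y))) ⁻¹'
        {p | coeff p.1 p.2 t ≠ 0} := fun σ hσ => hσ
  exact Set.Finite.subset ((coeff_finite t).preimage
    (fun a _ b _ hab => congrArg Prod.snd hab)) hsub

theorem toF_comp_id {x y : G} (u : Free.of K y ⟶ Free.of K x) (v : Free.of K x ⟶ Free.of K y) :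
    toF (v ≫ u) (𝟙 x) = ∑ᶠ σ : x ⟶ y, toF u (Groupoid.inv σ) * toF v σ := by
  suffices hs : ∀ w : (x ⟶ y) →₀ K,
      toF ((ofF w) ≫ u) (𝟙 x)
        = ∑ᶠ σ : x ⟶ y, toF u (Groupoid.inv σ) * toF (ofF w) σ
    from hs (toF v)
  intro w
  induction w using Finsupp.induction_linear with
  | zero =>
      have : (ofF (0 : (x ⟶ y) →₀ K)) = 0 := rfl
      rw [this, Limits.zero_comp]
      simp
  | add a b ha hb =>
      have : (ofF (a + b))
          = (ofF a) + (ofF b) :=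
        rfl
      rw [this, Preadditive.add_comp, toF_add, ha, hb, ← finsum_add_distrib]
      · congr 1; funext σ
        rw [toF_add]; ring
      · exact Set.Finite.subset (toF (ofF a)).finite_support
          (fun σ hσ => by
            simp only [Function.mem_support] at hσ ⊢
            intro hz; rw [show toF _ σ = (0:K) from hz, mul_zero] at hσ; exact hσ rfl)
      · exact Set.Finite.subset (toF (ofF b)).finite_support
          (fun σ hσ => by
            simp only [Function.mem_support] at hσ ⊢
            intro hz; rw [show toF _ σ = (0:K) from hz, mul_zero] at hσ; exact hσ rfl)
  | single τ s =>
      rw [show (ofF (Finsupp.single τ s))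
          = (Finsupp.single τ s : Free.of K x ⟶ Free.of K y) from rfl]
      rw [single_comp, Category.comp_id]
      rw [finsum_eq_single _ τ (fun σ hσ => by
        rw [toF_single, if_neg (fun hh => hσ hh.symm), mul_zero])]
      rw [toF_single, if_pos rfl]; ring

theorem compMap_coeff_id {x y : G}
    (t : (Free.of K y ⟶ Free.of K x) ⊗[K] (Free.of K x ⟶ Free.of K y)) :
    toF (compMap K (Free.of K x) (Free.of K x) (Free.of K y) t) (𝟙 x)
      = ∑ᶠ σ : x ⟶ y, coeff (Groupoid.inv σ) σ t := by
  induction t with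
  | zero => rw [map_zero]; simp
  | tmul u v =>
      have : compMap K (Free.of K x) (Free.of K x) (Free.of K y) (u ⊗ₜ v) = v ≫ u := by
        simp [compMap]
      rw [this, toF_comp_id]
      exact finsum_congr fun σ => (coeff_tmul _ _ _ _).symm
  | add s t hs ht =>
      rw [map_add, toF_add, hs, ht, ← finsum_add_distrib (diag_finite s) (diag_finite t)]
      exact finsum_congr fun σ => (map_add _ _ _).symm



/-- Composing on the right with a fixed arrow is an equivalence. -/
def homEquiv {x y z : G} (e : y ⟶ z) : (x ⟶ y) ≃ (x ⟶ z) where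
  toFun u := u ≫ e
  invFun v := v ≫ Groupoid.inv e
  left_inv u := by simp
  right_inv v := by simp

theorem diag_const (F : SeparabilityFamily K (Free K G)) (x y : G) (σ σ' : x ⟶ y) :
    coeff (Groupoid.inv σ) σ (F.a x y) = coeff (Groupoid.inv σ') σ' (F.a x y) := by
  set τ : x ⟶ x := σ ≫ Groupoid.inv σ' with hτ
  have h2 := congrArg (fun t => coeff (Groupoid.inv σ') σ t)
    (F.compat (show ((Free.of K x : Free K G) ⟶ Free.of K x) from Finsupp.single τ 1) y)
  have h1 := coeff_rTensor_single τ (1:K) (F.a x y) (Groupoid.inv σ') σ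
  have h3 := coeff_lTensor_single τ (1:K) (F.a x y) (Groupoid.inv σ') σ
  have e1 : Groupoid.inv σ' ≫ Groupoid.inv τ = Groupoid.inv σ := by
    rw [hτ]; simp [Groupoid.inv_eq_inv]
  have e2 : Groupoid.inv τ ≫ σ = σ' := by
    rw [hτ]; simp [Groupoid.inv_eq_inv]
  rw [e1, mul_one] at h1
  rw [e2, one_mul] at h3
  exact (h1.symm.trans h2).trans h3

theorem fin_of_diag_ne (F : SeparabilityFamily K (Free K G)) {x y : G} (σ : x ⟶ y)
    (hne : coeff (Groupoid.inv σ) σ (F.a x y) ≠ 0) : Finite (x ⟶ y) := by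
  haveI := (coeff_finite (F.a x y)).to_subtype
  refine Finite.of_injective
    (fun σ' : x ⟶ y => (⟨(Groupoid.inv σ', σ'), fun h0 => hne ((diag_const F x y σ σ').trans h0)⟩ :
      {p : (y ⟶ x) × (x ⟶ y) | coeff p.1 p.2 (F.a x y) ≠ 0})) ?_
  intro s s' hss
  exact congrArg (fun p => p.1.2) hss

theorem total_sum (F : SeparabilityFamily K (Free K G)) (x : G) :
    (∑ᶠ y : G, ∑ᶠ σ : x ⟶ y, coeff (Groupoid.inv σ) σ (F.a x y)) = 1 := by
  have h0 := congrArg (fun u => toF u (𝟙 x)) (F.sum_comp x)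
  have hmap := AddMonoidHom.map_finsum
    (AddMonoidHom.mk' (fun u : Free.of K x ⟶ Free.of K x => toF u (𝟙 x))
      (fun u v => toF_add u v (𝟙 x)))
    (f := fun y : G => compMap K (Free.of K x) (Free.of K x) (Free.of K y) (F.a x y)) ?_
  · have hone : toF (𝟙 (Free.of K x)) (𝟙 x) = 1 := by
      rw [show (𝟙 (Free.of K x)) = (Finsupp.single (𝟙 x) 1 : Free.of K x ⟶ Free.of K x) from rfl,
        toF_single, if_pos rfl]
    calc (∑ᶠ y : G, ∑ᶠ σ : x ⟶ y, coeff (Groupoid.inv σ) σ (F.a x y))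
        = ∑ᶠ y : G, toF (compMap K (Free.of K x) (Free.of K x) (Free.of K y) (F.a x y)) (𝟙 x) :=
          finsum_congr fun y => (compMap_coeff_id (F.a x y)).symm
      _ = toF (∑ᶠ y : G, compMap K (Free.of K x) (Free.of K x) (Free.of K y) (F.a x y)) (𝟙 x) :=
          hmap.symm
      _ = 1 := h0.trans hone
  · apply Set.Finite.subset (F.finite_support x)
    intro y hy
    simp only [Function.mem_support, Set.mem_setOf_eq] at hy ⊢
    intro hz
    apply hy
    show compMap K (Free.of K x) (Free.of K x) (Free.of K y) (F.a (Free.of K x) y) = 0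
    erw [hz, map_zero]

theorem forward (F : SeparabilityFamily K (Free K G)) (x y : G) :
    Finite (x ⟶ y) ∧ (Nonempty (x ⟶ y) → IsUnit ((Nat.card (x ⟶ y) : K))) := by
  -- find a good y₀
  have hex : ∃ (y₀ : G) (σ₀ : x ⟶ y₀), coeff (Groupoid.inv σ₀) σ₀ (F.a x y₀) ≠ 0 := by
    by_contra hcon
    push_neg at hcon
    have := total_sum F x
    rw [finsum_congr (fun y => (finsum_congr (fun σ => hcon y σ)).trans finsum_zero),
      finsum_zero] at this
    exact one_ne_zero this.symm
  obtain ⟨y₀, σ₀, hσ₀⟩ := hex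
  haveI hfin₀ : Finite (x ⟶ y₀) := fin_of_diag_ne F σ₀ hσ₀
  constructor
  · rcases isEmpty_or_nonempty (x ⟶ y) with he | hne
    · infer_instance
    · obtain ⟨f⟩ := hne
      exact Finite.of_equiv _ (homEquiv (Groupoid.inv f ≫ σ₀)).symm
  · rintro ⟨f⟩
    rw [isUnit_iff_ne_zero]
    intro hcard
    -- derive a contradiction with total_sum
    have hzero : ∀ y' : G, (∑ᶠ σ : x ⟶ y', coeff (Groupoid.inv σ) σ (F.a x y')) = 0 := by
      intro y'
      rcases isEmpty_or_nonempty (x ⟶ y') with he | hne'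
      · exact finsum_of_isEmpty _
      · obtain ⟨σ₁⟩ := hne'
        by_cases v0 : coeff (Groupoid.inv σ₁) σ₁ (F.a x y') = 0
        · exact (finsum_congr fun σ => (diag_const F x y' σ σ₁).trans v0).trans finsum_zero
        · haveI : Finite (x ⟶ y') := fin_of_diag_ne F σ₁ v0
          haveI := Fintype.ofFinite (x ⟶ y')
          have hc : Nat.card (x ⟶ y') = Nat.card (x ⟶ y) :=
            Nat.card_congr (homEquiv (Groupoid.inv σ₁ ≫ f))
          calc (∑ᶠ σ : x ⟶ y', coeff (Groupoid.inv σ) σ (F.a x y'))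
              = ∑ᶠ _σ : x ⟶ y', coeff (Groupoid.inv σ₁) σ₁ (F.a x y') :=
                finsum_congr fun σ => diag_const F x y' σ σ₁
            _ = ∑ _σ : x ⟶ y', coeff (Groupoid.inv σ₁) σ₁ (F.a x y') :=
                finsum_eq_sum_of_fintype _
            _ = (Nat.card (x ⟶ y') : K) * coeff (Groupoid.inv σ₁) σ₁ (F.a x y') := by
                rw [Finset.sum_const, Nat.card_eq_fintype_card, ← Finset.card_univ, nsmul_eq_mul]
            _ = 0 := by rw [hc, hcard, zero_mul]
    have := total_sum F x
    rw [finsum_congr hzero, finsum_zero] at this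
    exact one_ne_zero this.symm

/-- The setoid of isomorphism on objects of a groupoid. -/
def isoSetoid (G : Type*) [Groupoid G] : Setoid G where
  r x z := Nonempty (x ⟶ z)
  iseqv := ⟨fun x => ⟨𝟙 x⟩, fun ⟨f⟩ => ⟨Groupoid.inv f⟩, fun ⟨f⟩ ⟨g⟩ => ⟨f ≫ g⟩⟩

/-- A choice of representative in each isomorphism class. -/
noncomputable def rep (x : G) : G := Quotient.out (Quotient.mk (isoSetoid G) x)

theorem rep_spec (x : G) : Nonempty (x ⟶ rep x) := by
  have h : (isoSetoid G).r (Quotient.out (Quotient.mk (isoSetoid G) x)) x :=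
    Quotient.exact (Quotient.out_eq _)
  obtain ⟨f⟩ := h
  exact ⟨Groupoid.inv f⟩

theorem rep_eq {x z : G} (f : x ⟶ z) : rep x = rep z :=
  congrArg Quotient.out (Quotient.sound (⟨f⟩ : (isoSetoid G).r x z))

variable (K) in
open scoped Classical in
/-- The separability family elements. -/
noncomputable def A (x y : G) : (Free.of K y ⟶ Free.of K x) ⊗[K] (Free.of K x ⟶ Free.of K y) :=
  if y = rep x then
    (Nat.card (x ⟶ y) : K)⁻¹ •
      ∑ᶠ σ : x ⟶ y, (Finsupp.single (Groupoid.inv σ) 1 : Free.of K y ⟶ Free.of K x)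
        ⊗ₜ[K] (Finsupp.single σ 1 : Free.of K x ⟶ Free.of K y)
  else 0

theorem A_ne {x y : G} (h : y ≠ rep x) : A K x y = 0 := by rw [A, if_neg h]

theorem A_eq (x : G) {y : G} (h : y = rep x) : A K x y =
    (Nat.card (x ⟶ y) : K)⁻¹ •
      ∑ᶠ σ : x ⟶ y, (Finsupp.single (Groupoid.inv σ) 1 : Free.of K y ⟶ Free.of K x)
        ⊗ₜ[K] (Finsupp.single σ 1 : Free.of K x ⟶ Free.of K y) := by rw [A, if_pos h]

/-- left-composition equivalence -/
def homEquivL {x y z : G} (e : z ⟶ x) : (x ⟶ y) ≃ (z ⟶ y) where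
  toFun u := e ≫ u
  invFun v := Groupoid.inv e ≫ v
  left_inv u := by simp
  right_inv v := by simp

section Backward

variable (hfin : ∀ x y : G, Finite (x ⟶ y))
variable (hunit : ∀ x y : G, Nonempty (x ⟶ y) → IsUnit ((Nat.card (x ⟶ y) : K)))

include hfin hunit in
theorem A_sum_comp (x : G) :
    (∑ᶠ y : G, compMap K (Free.of K x) (Free.of K x) (Free.of K y) (A K x y)) =
      𝟙 (Free.of K x) := by
  rw [finsum_eq_single _ (rep x) (fun y hy => by rw [A_ne hy, map_zero])]
  obtain ⟨σ⟩ := rep_spec x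
  haveI := hfin x (rep x)
  haveI := Fintype.ofFinite (x ⟶ rep x)
  have hn : (Nat.card (x ⟶ rep x) : K) ≠ 0 := (hunit x (rep x) ⟨σ⟩).ne_zero
  have hsum : (∑ᶠ σ' : x ⟶ rep x,
      (Finsupp.single (Groupoid.inv σ') 1 : Free.of K (rep x) ⟶ Free.of K x)
        ⊗ₜ[K] (Finsupp.single σ' 1 : Free.of K x ⟶ Free.of K (rep x)))
      = ∑ σ' : x ⟶ rep x,
      (Finsupp.single (Groupoid.inv σ') 1 : Free.of K (rep x) ⟶ Free.of K x)
        ⊗ₜ[K] (Finsupp.single σ' 1 : Free.of K x ⟶ Free.of K (rep x)) :=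
    finsum_eq_sum_of_fintype _
  rw [A_eq x rfl, hsum, map_smul, map_sum]
  have hterm : ∀ σ' : x ⟶ rep x,
      compMap K (Free.of K x) (Free.of K x) (Free.of K (rep x))
        ((Finsupp.single (Groupoid.inv σ') 1 : Free.of K (rep x) ⟶ Free.of K x)
          ⊗ₜ[K] (Finsupp.single σ' 1 : Free.of K x ⟶ Free.of K (rep x)))
      = (Finsupp.single (𝟙 x) 1 : Free.of K x ⟶ Free.of K x) := by
    intro σ'
    have h1 : compMap K (Free.of K x) (Free.of K x) (Free.of K (rep x))
        ((Finsupp.single (Groupoid.inv σ') 1 : Free.of K (rep x) ⟶ Free.of K x)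
          ⊗ₜ[K] (Finsupp.single σ' 1 : Free.of K x ⟶ Free.of K (rep x)))
        = (Finsupp.single σ' 1 : Free.of K x ⟶ Free.of K (rep x)) ≫
          (Finsupp.single (Groupoid.inv σ') 1 : Free.of K (rep x) ⟶ Free.of K x) := by
      simp [compMap]
    rw [h1]; refine (Free.single_comp_single (R := K) (C := G) σ' (Groupoid.inv σ') 1 1).trans ?_
    rw [Groupoid.comp_inv, one_mul]; rfl
  rw [Finset.sum_congr rfl (fun σ' _ => hterm σ')]
  rw [Finset.sum_const]
  have hcast : ((Finset.univ (α := x ⟶ rep x)).card : ℕ) = Nat.card (x ⟶ rep x) := by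
    rw [Nat.card_eq_fintype_card, Finset.card_univ]
  rw [hcast]
  have : ((Nat.card (x ⟶ rep x)) • (Finsupp.single (𝟙 x) 1 : Free.of K x ⟶ Free.of K x))
      = (Nat.card (x ⟶ rep x) : K) • (Finsupp.single (𝟙 x) 1 : Free.of K x ⟶ Free.of K x) :=
    (Nat.cast_smul_eq_nsmul K _ _).symm
  rw [this, smul_smul, inv_mul_cancel₀ hn, one_smul]
  rfl

include hfin in
theorem A_compat_single (x z y : G) (τ : x ⟶ z) (r : K) :
    LinearMap.rTensor (Free.of K x ⟶ Free.of K y)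
        (Linear.rightComp K (Free.of K y) (Finsupp.single τ r : Free.of K x ⟶ Free.of K z))
        (A K x y)
      = LinearMap.lTensor (Free.of K y ⟶ Free.of K z)
        (Linear.leftComp K (Free.of K y) (Finsupp.single τ r : Free.of K x ⟶ Free.of K z))
        (A K z y) := by
  by_cases hy : y = rep x
  · have hyz : y = rep z := hy.trans (rep_eq τ)
    haveI := hfin x y
    haveI := hfin z y
    haveI := Fintype.ofFinite (x ⟶ y)
    haveI := Fintype.ofFinite (z ⟶ y)
    have hcard : (Nat.card (x ⟶ y) : K) = (Nat.card (z ⟶ y) : K) := by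
      rw [Nat.card_congr (homEquivL (Groupoid.inv τ) (y := y))]
    rw [A_eq x hy, A_eq z hyz, map_smul, map_smul, finsum_eq_sum_of_fintype,
      finsum_eq_sum_of_fintype, map_sum, map_sum, hcard]
    congr 1
    refine Fintype.sum_equiv (homEquivL (Groupoid.inv τ) (y := y)) _ _ (fun σ => ?_)
    rw [LinearMap.rTensor_tmul, LinearMap.lTensor_tmul]
    have h1 : Linear.rightComp K (Free.of K y)
        (Finsupp.single τ r : Free.of K x ⟶ Free.of K z)
        (Finsupp.single (Groupoid.inv σ) 1 : Free.of K y ⟶ Free.of K x)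
        = (Finsupp.single (Groupoid.inv σ ≫ τ) r : Free.of K y ⟶ Free.of K z) := by
      have : Linear.rightComp K (Free.of K y)
          (Finsupp.single τ r : Free.of K x ⟶ Free.of K z)
          (Finsupp.single (Groupoid.inv σ) 1 : Free.of K y ⟶ Free.of K x)
          = (Finsupp.single (Groupoid.inv σ) 1 : Free.of K y ⟶ Free.of K x) ≫
            (Finsupp.single τ r : Free.of K x ⟶ Free.of K z) := rfl
      rw [this]; refine (Free.single_comp_single (R := K) (C := G) _ _ _ _).trans ?_; rw [one_mul]; rfl
    have happ : homEquivL (Groupoid.inv τ) (y := y) σ = Groupoid.inv τ ≫ σ := rfl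
    rw [happ]
    have h2 : Linear.leftComp K (Free.of K y)
        (Finsupp.single τ r : Free.of K x ⟶ Free.of K z)
        (Finsupp.single (Groupoid.inv τ ≫ σ) 1 :
          Free.of K z ⟶ Free.of K y)
        = (Finsupp.single (τ ≫ (Groupoid.inv τ ≫ σ)) r : Free.of K x ⟶ Free.of K y) := by
      have : Linear.leftComp K (Free.of K y)
          (Finsupp.single τ r : Free.of K x ⟶ Free.of K z)
          (Finsupp.single (Groupoid.inv τ ≫ σ) 1 : Free.of K z ⟶ Free.of K y)
          = (Finsupp.single τ r : Free.of K x ⟶ Free.of K z) ≫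
            (Finsupp.single (Groupoid.inv τ ≫ σ) 1 : Free.of K z ⟶ Free.of K y) := rfl
      rw [this]; refine (Free.single_comp_single (R := K) (C := G) _ _ _ _).trans ?_; rw [mul_one]; rfl
    rw [h1]; erw [h2]
    have e1 : Groupoid.inv (Groupoid.inv τ ≫ σ) = Groupoid.inv σ ≫ τ := by
      simp [Groupoid.inv_eq_inv]
    have e2 : τ ≫ (Groupoid.inv τ ≫ σ) = σ := by simp
    erw [e1, e2]
    -- move the scalar across the tensor
    have m1 : (Finsupp.single (Groupoid.inv σ ≫ τ) r : Free.of K y ⟶ Free.of K z)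
        = r • (Finsupp.single (Groupoid.inv σ ≫ τ) 1 : Free.of K y ⟶ Free.of K z) := by
      rw [Finsupp.smul_single, smul_eq_mul, mul_one]
    have m2 : (Finsupp.single σ r : Free.of K x ⟶ Free.of K y)
        = r • (Finsupp.single σ 1 : Free.of K x ⟶ Free.of K y) := by
      erw [Finsupp.smul_single, smul_eq_mul, mul_one]
    rw [m1, m2, TensorProduct.smul_tmul]; rfl
  · have hyz : y ≠ rep z := fun h => hy (h.trans (rep_eq τ).symm)
    rw [A_ne hy, A_ne hyz, map_zero, map_zero]

include hfin in
theorem A_compat (x z : G) (f : Free.of K x ⟶ Free.of K z) (y : G) :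
    LinearMap.rTensor (Free.of K x ⟶ Free.of K y)
        (Linear.rightComp K (Free.of K y) f) (A K x y)
      = LinearMap.lTensor (Free.of K y ⟶ Free.of K z)
        (Linear.leftComp K (Free.of K y) f) (A K z y) := by
  suffices hs : ∀ w : (x ⟶ z) →₀ K,
      LinearMap.rTensor (Free.of K x ⟶ Free.of K y)
          (Linear.rightComp K (Free.of K y) (ofF w)) (A K x y)
        = LinearMap.lTensor (Free.of K y ⟶ Free.of K z)
          (Linear.leftComp K (Free.of K y) (ofF w)) (A K z y) from hs (toF f)
  intro w
  induction w using Finsupp.induction_linear with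
  | zero =>
      have hr : Linear.rightComp K (Free.of K y) (ofF (0 : (x ⟶ z) →₀ K)) = 0 := by
        apply LinearMap.ext; intro u
        show u ≫ (0 : Free.of K x ⟶ Free.of K z) = 0
        simp
      have hl : Linear.leftComp K (Free.of K y) (ofF (0 : (x ⟶ z) →₀ K)) = 0 := by
        apply LinearMap.ext; intro u
        show (0 : Free.of K x ⟶ Free.of K z) ≫ u = 0
        simp
      rw [hr, hl, LinearMap.rTensor_zero, LinearMap.lTensor_zero]
      simp
  | add a b ha hb =>
      have hr : Linear.rightComp K (Free.of K y) (ofF (a + b))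
          = Linear.rightComp K (Free.of K y) (ofF a) + Linear.rightComp K (Free.of K y) (ofF b) := by
        apply LinearMap.ext; intro u
        show u ≫ (ofF a + ofF b) = u ≫ ofF a + u ≫ ofF b
        simp
      have hl : Linear.leftComp K (Free.of K y) (ofF (a + b))
          = Linear.leftComp K (Free.of K y) (ofF a) + Linear.leftComp K (Free.of K y) (ofF b) := by
        apply LinearMap.ext; intro u
        show (ofF a + ofF b) ≫ u = ofF a ≫ u + ofF b ≫ u
        simp
      rw [hr, hl, LinearMap.rTensor_add, LinearMap.lTensor_add]
      rw [LinearMap.add_apply, LinearMap.add_apply, ha, hb]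
  | single τ s => exact A_compat_single hfin x z y τ s

end Backward

end FreeSepAux

/-- `K[G]` is separable iff all Hom-sets of the groupoid `G` are finite of cardinality
invertible in `K` (whenever nonempty). -/
theorem free_groupoid_separable_iff (K : Type*) [Field K]
    (G : Type*) [Groupoid G] :
    Nonempty (SeparabilityFamily K (Free K G)) ↔
      ∀ x y : G, Finite (x ⟶ y) ∧
        (Nonempty (x ⟶ y) → IsUnit ((Nat.card (x ⟶ y) : K))) := by
  constructor
  · rintro ⟨F⟩ x y
    exact FreeSepAux.forward F x y
  · intro h
    refine ⟨⟨FreeSepAux.A (K := K) (G := G), ?_, ?_, ?_⟩⟩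
    · intro x
      apply Set.Finite.subset (Set.finite_singleton
        (show Free K G from FreeSepAux.rep (G := G) x))
      intro y hy
      by_contra hne
      exact hy (FreeSepAux.A_ne (K := K) (G := G) hne)
    · intro x
      exact FreeSepAux.A_sum_comp (fun a b => (h a b).1) (fun a b => (h a b).2) x
    · intro x z f y
      exact FreeSepAux.A_compat (fun a b => (h a b).1) x z f y
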